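/- Let G be a finite connected simple graph and A a nonempty set of vertices. Consider threshold-1 Greenberg–Hastings dynamics (S = {n ∈ ℕ : n ≥ 1}) started from the configuration c_0 in which every vertex of A is excited and every other vertex is resting. Then for every time t ≥ 0 and every vertex v: c_t(v) is excited if and only if dist(v,A) = t, and c_t(v) is refractory if and only if t ≥ 1 and dist(v,A) = t − 1, where dist(v,A) = min_{a ∈ A} dist(v,a). (Waves emanating from several sources merge rather than pass through each other.) -/
import Mathlib


/-- The three states of a Greenberg–Hastings excitable automaton node. -/
inductive GHState where
  | resting : GHState
  | excited : GHState
  | refractory : GHState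
deriving DecidableEq

open GHState

/-- Number of excited neighbours of `v` in configuration `c`. -/
def excitedCount {V : Type*} (G : SimpleGraph V) [Fintype V] [DecidableRel G.Adj]
    (c : V → GHState) (v : V) : ℕ :=
  ((G.neighborFinset v).filter (fun u => c u = excited)).card

/-- Greenberg–Hastings update map `F_S`: a resting vertex becomes excited iff its
number of excited neighbours lies in `S`; an excited vertex becomes refractory;
a refractory vertex becomes resting. -/
def ghStep {V : Type*} (G : SimpleGraph V) [Fintype V] [DecidableRel G.Adj]
    (S : Set ℕ) [DecidablePred (· ∈ S)] (c : V → GHState) : V → GHState :=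
  fun v =>
    match c v with
    | resting => if excitedCount G c v ∈ S then excited else resting
    | excited => refractory
    | refractory => resting

section Aux

variable {V : Type*} {G : SimpleGraph V}

lemma distA_zero (hconn : G.Connected) (A : Finset V) (hA : A.Nonempty) (v : V) :
    A.inf' hA (fun a => G.dist v a) = 0 ↔ v ∈ A := by
  constructor
  · intro h
    obtain ⟨a, ha, hEq⟩ := Finset.exists_mem_eq_inf' hA (fun a => G.dist v a)
    have hz : G.dist v a = 0 := by rw [← hEq]; exact h
    rwa [(hconn.dist_eq_zero_iff).mp hz]
  · intro h
    have h1 := Finset.inf'_le (fun a => G.dist v a) h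
    rw [SimpleGraph.dist_self] at h1
    omega

lemma distA_adj (hconn : G.Connected) (A : Finset V) (hA : A.Nonempty) {u v : V}
    (h : G.Adj u v) :
    A.inf' hA (fun a => G.dist u a) ≤ A.inf' hA (fun a => G.dist v a) + 1 := by
  obtain ⟨a, ha, hEq⟩ := Finset.exists_mem_eq_inf' hA (fun a => G.dist v a)
  calc A.inf' hA (fun a => G.dist u a) ≤ G.dist u a := Finset.inf'_le _ ha
    _ ≤ G.dist u v + G.dist v a := hconn.dist_triangle
    _ ≤ 1 + G.dist v a := by
        have : G.dist u v ≤ 1 := by simpa using SimpleGraph.dist_le h.toWalk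
        omega
    _ = A.inf' hA (fun a => G.dist v a) + 1 := by omega

lemma distA_succ (hconn : G.Connected) (A : Finset V) (hA : A.Nonempty) {v : V} {n : ℕ}
    (h : A.inf' hA (fun a => G.dist v a) = n + 1) :
    ∃ u, G.Adj v u ∧ A.inf' hA (fun a => G.dist u a) = n := by
  obtain ⟨a, ha, hEq⟩ := Finset.exists_mem_eq_inf' hA (fun a => G.dist v a)
  rw [h] at hEq
  obtain ⟨p, hp⟩ := (hconn v a).exists_walk_length_eq_dist
  rw [← hEq] at hp
  cases p with
  | nil => simp at hp
  | cons hadj q =>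
    rename_i u
    refine ⟨u, hadj, le_antisymm ?_ ?_⟩
    · calc A.inf' hA (fun a => G.dist u a) ≤ G.dist u a := Finset.inf'_le _ ha
        _ ≤ q.length := SimpleGraph.dist_le q
        _ = n := by simpa using hp
    · have h2 := distA_adj hconn A hA hadj
      omega

end Aux

/-- Threshold-1 Greenberg–Hastings dynamics started from a nonempty excited set `A`
(all other vertices resting): at time `t`, a vertex is excited iff its distance to `A`
is `t`, and refractory iff `t ≥ 1` and its distance to `A` is `t-1`.  Waves emanating
from several sources merge rather than pass through each other. -/
theorem multi_source_waves_merge {V : Type*} (G : SimpleGraph V)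
    [Fintype V] [DecidableEq V] [DecidableRel G.Adj]
    (hconn : G.Connected) (A : Finset V) (hA : A.Nonempty) :
    ∀ t : ℕ, ∀ v : V,
      ((ghStep G {n : ℕ | 1 ≤ n})^[t] (fun u => if u ∈ A then excited else resting) v
          = excited ↔ A.inf' hA (fun a => G.dist v a) = t) ∧
      ((ghStep G {n : ℕ | 1 ≤ n})^[t] (fun u => if u ∈ A then excited else resting) v
          = refractory ↔ 1 ≤ t ∧ A.inf' hA (fun a => G.dist v a) = t - 1) := by
  intro t
  induction t with
  | zero =>
    intro v
    simp only [Function.iterate_zero, id]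
    constructor
    · rw [distA_zero hconn A hA v]
      by_cases hv : v ∈ A <;> simp [hv]
    · by_cases hv : v ∈ A <;> simp [hv]
  | succ t ih =>
    intro v
    rw [Function.iterate_succ_apply']
    set c := (ghStep G {n : ℕ | 1 ≤ n})^[t] (fun u => if u ∈ A then excited else resting)
      with hc
    rcases hcv : c v with _ | _ | _
    · -- resting
      have hne : (A.inf' hA fun a => G.dist v a) ≠ t := by
        intro h
        have := (ih v).1.mpr h
        rw [hcv] at this
        exact GHState.noConfusion this
      have hnr : ¬(1 ≤ t ∧ (A.inf' hA fun a => G.dist v a) = t - 1) := by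
        intro h
        have := (ih v).2.mpr h
        rw [hcv] at this
        exact GHState.noConfusion this
      have hex : excitedCount G c v ∈ {n : ℕ | 1 ≤ n} ↔
          ∃ u, G.Adj v u ∧ (A.inf' hA fun a => G.dist u a) = t := by
        constructor
        · intro h
          obtain ⟨u, hu⟩ := Finset.card_pos.mp h
          rw [Finset.mem_filter, SimpleGraph.mem_neighborFinset] at hu
          exact ⟨u, hu.1, (ih u).1.mp hu.2⟩
        · rintro ⟨u, hadj, hdu⟩
          have hu : u ∈ (G.neighborFinset v).filter (fun u => c u = excited) := by
            rw [Finset.mem_filter, SimpleGraph.mem_neighborFinset]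
            exact ⟨hadj, (ih u).1.mpr hdu⟩
          exact Finset.card_pos.mpr ⟨u, hu⟩
      have hdchar : (A.inf' hA fun a => G.dist v a) = t + 1 ↔ ∃ u, G.Adj v u ∧ (A.inf' hA fun a => G.dist u a) = t := by
        constructor
        · intro h
          exact distA_succ hconn A hA h
        · rintro ⟨u, hadj, hdu⟩
          have h1 := distA_adj hconn A hA hadj
          have h2 := distA_adj hconn A hA hadj.symm
          rw [hdu] at h1 h2
          omega
      simp only [ghStep, hcv]
      constructor
      · split_ifs with h
        · simp only [true_iff, iff_true]
          exact (hdchar.mpr (hex.mp h)).symm ▸ (by simp)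
        · constructor
          · intro hcon; exact absurd hcon (by simp)
          · intro hdv
            exact absurd (hex.mpr (hdchar.mp hdv)) h
      · have : (A.inf' hA fun a => G.dist v a) ≠ t := hne
        split_ifs with h <;>
          · constructor
            · intro hcon; exact absurd hcon (by simp)
            · rintro ⟨-, hdv⟩
              simp only [Nat.add_sub_cancel] at hdv
              exact absurd hdv hne
    · -- excited
      have hd : (A.inf' hA fun a => G.dist v a) = t := (ih v).1.mp hcv
      simp only [ghStep, hcv]
      constructor
      · constructor
        · intro hcon; exact absurd hcon (by simp)
        · intro hdv; omega
      · constructor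
        · intro _; exact ⟨by omega, by omega⟩
        · intro _; trivial
    · -- refractory
      obtain ⟨ht, hd⟩ := (ih v).2.mp hcv
      simp only [ghStep, hcv]
      constructor
      · constructor
        · intro hcon; exact absurd hcon (by simp)
        · intro hdv; omega
      · constructor
        · intro hcon; exact absurd hcon (by simp)
        · rintro ⟨-, hdv⟩
          simp only [Nat.add_sub_cancel] at hdv
          omega
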